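/- Let (Ω, 𝓕, P) be a probability space, let (Θ, d) be a compact separable metric space, and let Q : Θ → ℝ be continuous with a unique maximizer θ₀ (Q(θ) < Q(θ₀) for every θ ≠ θ₀). Let Θ_n ⊆ Θ be nonempty closed sets, let θ_n* ∈ Θ_n satisfy d(θ_n*, θ₀) → 0, and for each n let Q̂_n : Ω × Θ → ℝ be measurable in ω and continuous in θ, and let θ̂_n : Ω → Θ be measurable with θ̂_n(ω) ∈ Θ_n and Q̂_n(ω, θ̂_n(ω)) ≥ sup_{θ ∈ Θ_n} Q̂_n(ω, θ) for every ω. If the random variables sup_{θ ∈ Θ_n} |Q̂_n(·, θ) − Q(θ)| converge to 0 in probability, then d(θ̂_n, θ₀) converges to 0 in probability. -/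

import Mathlib

open MeasureTheory Filter

/-- **Stochastic consistency of sieve extremum estimators.** Let `Θ` be a compact separable
metric space, `Q` continuous with unique maximizer `θ₀`, `Θₙ ⊆ Θ` nonempty closed sieve sets
containing points `θₙ* → θ₀`, `Q̂ₙ(ω, θ)` Carathéodory criteria, and `θ̂ₙ(ω) ∈ Θₙ` maximizers
of `Q̂ₙ(ω, ·)` over `Θₙ`. If `sup_{θ ∈ Θₙ} |Q̂ₙ(·, θ) − Q(θ)| → 0` in probability, then
`θ̂ₙ → θ₀` in probability. -/
theorem sieve_consistency_in_probability
    {Ω : Type*} [MeasurableSpace Ω] (P : Measure Ω) [IsProbabilityMeasure P]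
    {Θ : Type*} [MetricSpace Θ] [CompactSpace Θ] [TopologicalSpace.SeparableSpace Θ]
    [MeasurableSpace Θ] [BorelSpace Θ]
    (Q : Θ → ℝ) (hQcont : Continuous Q)
    (θ₀ : Θ) (hmax : ∀ θ : Θ, θ ≠ θ₀ → Q θ < Q θ₀)
    (Θn : ℕ → Set Θ) (hne : ∀ n, (Θn n).Nonempty) (hcl : ∀ n, IsClosed (Θn n))
    (θstar : ℕ → Θ) (hstarmem : ∀ n, θstar n ∈ Θn n)
    (hstar : Tendsto (fun n => dist (θstar n) θ₀) atTop (nhds 0))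
    (Qhat : ℕ → Ω → Θ → ℝ)
    (hQhatmeas : ∀ n (θ : Θ), Measurable (fun ω => Qhat n ω θ))
    (hQhatcont : ∀ n (ω : Ω), Continuous (fun θ => Qhat n ω θ))
    (θhat : ℕ → Ω → Θ) (hθhatmeas : ∀ n, Measurable (θhat n))
    (hhatmem : ∀ n ω, θhat n ω ∈ Θn n)
    (hhatmax : ∀ n ω, ∀ θ ∈ Θn n, Qhat n ω θ ≤ Qhat n ω (θhat n ω))
    (hunif : TendstoInMeasure P
      (fun n ω => ⨆ θ ∈ Θn n, |Qhat n ω θ - Q θ|) atTop (fun _ => (0:ℝ))) :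
    TendstoInMeasure P (fun n ω => θhat n ω) atTop (fun _ => θ₀) := by
  rw [tendstoInMeasure_iff_dist] at hunif ⊢
  intro ε hε
  by_cases hK : ({θ : Θ | ε ≤ dist θ θ₀}).Nonempty
  · -- K nonempty: take max of Q on K
    have hKcl : IsClosed {θ : Θ | ε ≤ dist θ θ₀} :=
      isClosed_le continuous_const (continuous_id.dist continuous_const)
    obtain ⟨θ₁, hθ₁K, hθ₁max⟩ := hKcl.isCompact.exists_isMaxOn hK hQcont.continuousOn
    have hθ₁ne : θ₁ ≠ θ₀ := by
      intro h; rw [h] at hθ₁K; simp only [Set.mem_setOf_eq, dist_self] at hθ₁K; linarith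
    have hM : Q θ₁ < Q θ₀ := hmax θ₁ hθ₁ne
    set δ : ℝ := (Q θ₀ - Q θ₁) / 3 with hδdef
    have hδ : 0 < δ := by simp only [hδdef]; linarith
    have hθtend : Tendsto θstar atTop (nhds θ₀) :=
      tendsto_iff_dist_tendsto_zero.mpr hstar
    have hQs : ∀ᶠ n in atTop, Q θ₀ - δ < Q (θstar n) :=
      (hQcont.continuousAt.tendsto.comp hθtend).eventually
        (eventually_gt_nhds (by linarith))
    refine tendsto_of_tendsto_of_tendsto_of_le_of_le' tendsto_const_nhds (hunif δ hδ)
      (Eventually.of_forall (fun n => zero_le)) ?_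
    filter_upwards [hQs] with n hn
    refine measure_mono ?_
    intro ω hω
    simp only [Set.mem_setOf_eq] at hω ⊢
    by_contra hS
    push_neg at hS
    rw [Real.dist_eq, sub_zero] at hS
    set S := ⨆ θ ∈ Θn n, |Qhat n ω θ - Q θ| with hSdef
    have hSlt : S < δ := lt_of_le_of_lt (le_abs_self S) hS
    -- bound the function by its biSup
    obtain ⟨θc, -, hθc⟩ := isCompact_univ.exists_isMaxOn ⟨θ₀, Set.mem_univ θ₀⟩
      (((hQhatcont n ω).sub hQcont).abs.continuousOn)
    have hC : ∀ θ : Θ, |Qhat n ω θ - Q θ| ≤ |Qhat n ω θc - Q θc| :=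
      fun θ => hθc (Set.mem_univ θ)
    have hb : BddAbove (Set.range fun θ => ⨆ _ : θ ∈ Θn n, |Qhat n ω θ - Q θ|) := by
      refine ⟨max |Qhat n ω θc - Q θc| 0, ?_⟩
      rintro x ⟨θ', rfl⟩
      by_cases h : θ' ∈ Θn n
      · dsimp only; rw [ciSup_pos h]; exact le_max_of_le_left (hC θ')
      · haveI : IsEmpty (θ' ∈ Θn n) := ⟨h⟩
        dsimp only; rw [Real.iSup_of_isEmpty]; exact le_max_right _ _
    have hle : ∀ θ ∈ Θn n, |Qhat n ω θ - Q θ| ≤ S := by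
      intro θ hθ
      have h' : (⨆ _ : θ ∈ Θn n, |Qhat n ω θ - Q θ|) = |Qhat n ω θ - Q θ| := ciSup_pos hθ
      simpa [h'] using le_ciSup hb θ
    have h1 := abs_lt.mp (lt_of_le_of_lt (hle (θstar n) (hstarmem n)) hSlt)
    have h3 := abs_lt.mp (lt_of_le_of_lt (hle (θhat n ω) (hhatmem n ω)) hSlt)
    have h2 := hhatmax n ω (θstar n) (hstarmem n)
    have hQθhat : Q θ₁ < Q (θhat n ω) := by
      simp only [hδdef] at h1 h3 hn; linarith [h1.1, h1.2, h3.1, h3.2]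
    exact absurd (hθ₁max (show θhat n ω ∈ {θ : Θ | ε ≤ dist θ θ₀} from hω)) (not_le.mpr hQθhat)
  · -- K empty: events are empty
    have : ∀ n, P {ω | ε ≤ dist (θhat n ω) θ₀} = 0 := by
      intro n
      have : {ω | ε ≤ dist (θhat n ω) θ₀} = ∅ := by
        ext ω; simp only [Set.mem_setOf_eq, Set.mem_empty_iff_false, iff_false]
        intro h; exact hK ⟨θhat n ω, h⟩
      rw [this, measure_empty]
    simp only [this]
    exact (tendsto_const_nhds : Tendsto (fun _ : ℕ => (0:ENNReal)) atTop (nhds 0))
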